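/- Let n ≥ 1 be odd. Then p_n(Z) - 2 = q_1(Z) · ∏_{d | n, d ≠ 1} q_d(Z)², where p_n is the trace polynomial family (p_1 = Z, p_2 = Z² - 2, p_n = Z·p_{n-1} - p_{n-2}), q_1(Z) = Z - 2, and for d ≥ 3 the polynomial q_d is determined by g_d(X) = X^{φ(d)/2} q_d(X + 1/X) for the d-th cyclotomic polynomial g_d. -/

import Mathlib

open Polynomial

noncomputable def tracePoly : ℕ → Polynomial ℂ
  | 0 => 1
  | 1 => X
  | 2 => X ^ 2 - 2
  | (n + 3) => X * tracePoly (n + 2) - tracePoly (n + 1)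

lemma tracePoly_eval (n : ℕ) (x : ℂ) (hx : x ≠ 0) :
    (tracePoly (n + 1)).eval (x + x⁻¹) = x ^ (n + 1) + x⁻¹ ^ (n + 1) := by
  induction n using Nat.strong_induction_on with
  | _ n ih =>
    match n with
    | 0 => simp [tracePoly]
    | 1 =>
      simp only [tracePoly, eval_sub, eval_pow, eval_X, eval_ofNat]
      simp only [inv_pow]
      field_simp
      ring
    | (m + 2) =>
      have h1 := ih m (by omega)
      have h2 := ih (m + 1) (by omega)
      show (tracePoly (m + 3)).eval _ = _
      rw [show tracePoly (m + 3) = X * tracePoly (m + 2) - tracePoly (m + 1) from rfl]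
      simp only [eval_sub, eval_mul, eval_X, h1, h2]
      simp only [inv_pow]
      field_simp
      ring

theorem stmt9 (q : ℕ → Polynomial ℂ) (hq1 : q 1 = X - 2) (hq2 : q 2 = X + 2)
    (hq : ∀ d : ℕ, 3 ≤ d → ∀ x : ℂ, x ≠ 0 →
      (Polynomial.cyclotomic d ℂ).eval x = x ^ (Nat.totient d / 2) * (q d).eval (x + x⁻¹))
    (n : ℕ) (hn : 1 ≤ n) (hodd : Odd n) :
    tracePoly n - 2 = q 1 * ∏ d ∈ n.divisors.erase 1, (q d) ^ 2 := by
  apply Polynomial.funext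
  intro z
  -- find x with x + x⁻¹ = z
  obtain ⟨x, hx⟩ : ∃ x : ℂ, x ^ 2 - z * x + 1 = 0 := by
    have hdeg : (X ^ 2 - C z * X + 1 : Polynomial ℂ).degree = 2 := by
      compute_degree!
    obtain ⟨x, hx⟩ := Complex.exists_root (f := X ^ 2 - C z * X + 1) (by rw [hdeg]; norm_num)
    exact ⟨x, by simpa using hx⟩
  have hx0 : x ≠ 0 := by
    intro h; rw [h] at hx; simp at hx
  have hz : z = x + x⁻¹ := by
    field_simp
    linear_combination -hx
  -- facts about the divisor set
  set E := n.divisors.erase 1 with hE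
  have hn0 : n ≠ 0 := by omega
  have h1mem : 1 ∈ n.divisors := Nat.one_mem_divisors.mpr hn0
  have hdE : ∀ d ∈ E, 3 ≤ d := by
    intro d hd
    have hd1 : d ≠ 1 := (Finset.mem_erase.mp hd).1
    have hdvd : d ∣ n := Nat.dvd_of_mem_divisors (Finset.mem_of_mem_erase hd)
    have hd0 : d ≠ 0 := by rintro rfl; exact hn0 (Nat.zero_dvd.mp hdvd)
    have hd2 : d ≠ 2 := by
      rintro rfl
      exact (Nat.not_even_iff_odd.mpr hodd) (even_iff_two_dvd.mpr hdvd)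
    omega
  -- sum of totients
  have hsum : (∑ d ∈ E, Nat.totient d) = n - 1 := by
    have h2 := Finset.sum_erase_add n.divisors Nat.totient h1mem
    rw [Nat.totient_one, Nat.sum_totient] at h2
    rw [← hE] at h2
    omega
  set S := ∑ d ∈ E, Nat.totient d / 2 with hS
  have h2S : 2 * S = n - 1 := by
    rw [hS, Finset.mul_sum, ← hsum]
    refine Finset.sum_congr rfl fun d hd => ?_
    have hev : Even (Nat.totient d) := Nat.totient_even (by have := hdE d hd; omega)
    obtain ⟨k, hk⟩ := hev
    omega
  have hnS : n = 2 * S + 1 := by omega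
  -- cyclotomic product
  set P := ∏ d ∈ E, (q d).eval z with hP
  have hcyc : x ^ n - 1 = (x - 1) * (x ^ S * P) := by
    have h := Polynomial.prod_cyclotomic_eq_X_pow_sub_one (by omega : 0 < n) ℂ
    have h' : ∏ d ∈ n.divisors, (cyclotomic d ℂ).eval x = x ^ n - 1 := by
      rw [← Polynomial.eval_prod, h]; simp
    rw [← Finset.prod_erase_mul _ _ h1mem] at h'
    rw [← h']
    have hterm : ∀ d ∈ E, (cyclotomic d ℂ).eval x = x ^ (Nat.totient d / 2) * (q d).eval z := by
      intro d hd
      rw [hq d (hdE d hd) x hx0, hz]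
    rw [Finset.prod_congr rfl hterm, Finset.prod_mul_distrib, Finset.prod_pow_eq_pow_sum]
    simp [Polynomial.cyclotomic_one]
    ring
  -- evaluate both sides
  obtain ⟨m, rfl⟩ : ∃ m, n = m + 1 := ⟨n - 1, by omega⟩
  have hL : (tracePoly (m + 1)).eval z = x ^ (m + 1) + x⁻¹ ^ (m + 1) := by
    rw [hz]; exact tracePoly_eval m x hx0
  have hRHS : (q 1 * ∏ d ∈ E, q d ^ 2).eval z = (z - 2) * P ^ 2 := by
    simp [Polynomial.eval_prod, hq1, hP, Finset.prod_pow]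
  rw [Polynomial.eval_sub, hL, hRHS]
  have key : x ^ (m + 1) + x⁻¹ ^ (m + 1) - 2 = x⁻¹ ^ (m + 1) * (x ^ (m + 1) - 1) ^ 2 := by
    simp only [inv_pow]
    field_simp
    ring
  have h2 : (2 : Polynomial ℂ).eval z = 2 := by simp
  rw [h2, key, hcyc, hnS, hz]
  simp only [inv_pow]
  field_simp
  ring
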